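/- Let X, Y be sets, W ⊆ X, η an infinite ordinal, and for each α ∈ W let (P̌_{α,ξ})_{ξ<η} be decreasing sequences of subsets of Y (sections of global sets P̌_ξ ⊆ X×Y) with Y \ A_α = 𝔻*_{ξ<η} P̌_{α,ξ}. Define Q̌_0 = X × Y, Q̌_1 = W × Y, and Q̌_{2+ξ} = (W × Y) ∩ P̌_ξ for ξ < η. Then (Q̌_ξ)_{ξ<η} is decreasing and 𝔻*_{ξ<η} Q̌_ξ = (X × Y) \ ⨆_{α∈W} A_α, i.e., the complement of {(α,y) : α ∈ W, y ∈ A_α}. -/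

import Mathlib

/-- The decreasing difference of an ordinal-indexed decreasing sequence:
`x ∈ ddiffOrd η B` iff `{ξ < η : x ∈ B ξ}` has a greatest element which is even. -/
def ddiffOrd {X : Type*} (η : Ordinal) (B : Ordinal → Set X) : Set X :=
  {x | ∃ m, IsGreatest {ξ : Ordinal | ξ < η ∧ x ∈ B ξ} m ∧ m % 2 = 0}

lemma ord_cases12 (ζ : Ordinal) : ζ = 0 ∨ ζ = 1 ∨ ∃ ξ, ζ = 2 + ξ := by
  rcases lt_or_ge ζ 2 with h | h
  · rcases lt_or_ge ζ 1 with h1 | h1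
    · exact Or.inl (Ordinal.lt_one_iff_zero.mp h1)
    · refine Or.inr (Or.inl (le_antisymm ?_ h1))
      rw [show (2:Ordinal) = Order.succ 1 by rw [← Ordinal.add_one_eq_succ]; norm_num] at h
      exact Order.lt_succ_iff.mp h
  · exact Or.inr (Or.inr ⟨ζ - 2, (Ordinal.add_sub_cancel_of_le h).symm⟩)

lemma two_add_absorb12 {ξ : Ordinal} (h : Ordinal.omega0 ≤ ξ) : 2 + ξ = ξ := by
  conv_lhs => rw [← Ordinal.add_sub_cancel_of_le h, ← add_assoc,
    Ordinal.add_omega0 (by exact_mod_cast Ordinal.nat_lt_omega0 2)]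
  exact Ordinal.add_sub_cancel_of_le h

lemma two_add_mod12 (m : Ordinal) : (2 + m) % 2 = m % 2 := by
  conv_lhs => rw [← Ordinal.div_add_mod m 2, ← add_assoc]
  rw [show (2:Ordinal) + 2 * (m / 2) = 2 * (1 + m / 2) by rw [mul_add, mul_one],
    Ordinal.mul_add_mod_self]
  conv_rhs => rw [← Ordinal.div_add_mod m 2, Ordinal.mul_add_mod_self]

/-- If `η` is infinite and `(A α)ᶜ = 𝔻*_{ξ<η} (P̌_ξ)^{[α]}` for each `α ∈ W`
(sections decreasing), then with `Q̌_0 = X × Y`, `Q̌_1 = W × Y`, and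
`Q̌_{2+ξ} = (W × Y) ∩ P̌_ξ`, the sequence `(Q̌_ζ)_{ζ<η}` is decreasing and
`𝔻*_{ζ<η} Q̌_ζ = (X × Y) \ ⨆_{α∈W} A_α`. -/
theorem stmt12 {X Y : Type*} (η : Ordinal) (hη : Ordinal.omega0 ≤ η)
    (W : Set X) (A : X → Set Y) (Pc : Ordinal → Set (X × Y))
    (hdec : ∀ α ∈ W, ∀ ξ ζ : Ordinal, ξ ≤ ζ → ζ < η →
      {y : Y | (α, y) ∈ Pc ζ} ⊆ {y : Y | (α, y) ∈ Pc ξ})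
    (hA : ∀ α ∈ W, (A α)ᶜ = ddiffOrd η (fun ξ => {y : Y | (α, y) ∈ Pc ξ}))
    (Q : Ordinal → Set (X × Y))
    (hQ0 : Q 0 = Set.univ) (hQ1 : Q 1 = W ×ˢ (Set.univ : Set Y))
    (hQ2 : ∀ ξ : Ordinal, Q (2 + ξ) = (W ×ˢ (Set.univ : Set Y)) ∩ Pc ξ) :
    (∀ ξ ζ : Ordinal, ξ ≤ ζ → ζ < η → Q ζ ⊆ Q ξ) ∧
    ddiffOrd η Q = {p : X × Y | p.1 ∈ W ∧ p.2 ∈ A p.1}ᶜ := by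
  have hadd : ∀ ξ : Ordinal, ξ < η → 2 + ξ < η := by
    intro ξ hξ
    rcases lt_or_ge ξ Ordinal.omega0 with h | h
    · obtain ⟨n, rfl⟩ := Ordinal.lt_omega0.mp h
      calc (2 : Ordinal) + n = ((2 + n : ℕ) : Ordinal) := by push_cast; ring_nf
        _ < Ordinal.omega0 := Ordinal.nat_lt_omega0 _
        _ ≤ η := hη
    · rwa [two_add_absorb12 h]
  have hQW : ∀ ζ : Ordinal, ζ ≠ 0 → Q ζ ⊆ W ×ˢ (Set.univ : Set Y) := by
    intro ζ hζ
    rcases ord_cases12 ζ with rfl | rfl | ⟨ξ, rfl⟩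
    · exact absurd rfl hζ
    · rw [hQ1]
    · rw [hQ2]; exact Set.inter_subset_left
  have hmono : ∀ ξ ζ : Ordinal, ξ ≤ ζ → ζ < η → Q ζ ⊆ Q ξ := by
    intro ξ ζ hξζ hζ
    rcases ord_cases12 ξ with rfl | rfl | ⟨ξ', rfl⟩
    · rw [hQ0]; exact Set.subset_univ _
    · rcases eq_or_ne ζ 0 with rfl | hζ0
      · exact absurd hξζ (by simp)
      · intro p hp
        rw [hQ1]; exact hQW ζ hζ0 hp
    · rcases ord_cases12 ζ with rfl | rfl | ⟨ζ', rfl⟩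
      · exact absurd hξζ (not_le.mpr (lt_of_lt_of_le (by norm_num : (0:Ordinal) < 2)
          ((le_self_add : (2:Ordinal) ≤ 2 + ξ'))))
      · exact absurd hξζ (not_le.mpr (lt_of_lt_of_le (by norm_num : (1:Ordinal) < 2)
          ((le_self_add : (2:Ordinal) ≤ 2 + ξ'))))
      · have hle : ξ' ≤ ζ' := by rwa [add_le_add_iff_left] at hξζ
        have hζ' : ζ' < η := lt_of_le_of_lt ((le_add_self : ζ' ≤ 2 + ζ')) hζ
        rintro ⟨α, y⟩ hp
        rw [hQ2] at hp ⊢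
        obtain ⟨hW, hP⟩ := hp
        have hαW : α ∈ W := hW.1
        exact ⟨hW, hdec α hαW ξ' ζ' hle hζ' hP⟩
  refine ⟨hmono, ?_⟩
  ext ⟨α, y⟩
  simp only [ddiffOrd, Set.mem_compl_iff, Set.mem_setOf_eq]
  have hηpos : (0:Ordinal) < η := lt_of_lt_of_le Ordinal.omega0_pos hη
  have h1η : (1:Ordinal) < η := lt_of_lt_of_le Ordinal.one_lt_omega0 hη
  by_cases hW : α ∈ W
  · by_cases hex : ∃ ξ, ξ < η ∧ (α, y) ∈ Pc ξ
    · obtain ⟨ξ₀, hξ₀, hP₀⟩ := hex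
      have hRHS : ¬(α ∈ W ∧ y ∈ A α) ↔ y ∈ (A α)ᶜ := by
        simp [hW]
      rw [hRHS, hA α hW]
      simp only [ddiffOrd, Set.mem_setOf_eq]
      constructor
      · rintro ⟨M, hM, hMe⟩
        have hT₀ : (2 + ξ₀) ∈ {ξ : Ordinal | ξ < η ∧ (α, y) ∈ Q ξ} :=
          ⟨hadd ξ₀ hξ₀, by rw [hQ2]; exact ⟨⟨hW, trivial⟩, hP₀⟩⟩
        have h2M : 2 ≤ M := le_trans ((le_self_add : (2:Ordinal) ≤ 2 + ξ₀)) (hM.2 hT₀)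
        obtain ⟨m, rfl⟩ : ∃ m, M = 2 + m := ⟨M - 2, (Ordinal.add_sub_cancel_of_le h2M).symm⟩
        refine ⟨m, ⟨⟨lt_of_le_of_lt ((le_add_self : m ≤ 2 + m)) hM.1.1, ?_⟩, ?_⟩, ?_⟩
        · have := hM.1.2
          rw [hQ2] at this
          exact this.2
        · intro ξ hξ
          have : 2 + ξ ≤ 2 + m := hM.2 ⟨hadd ξ hξ.1, by rw [hQ2]; exact ⟨⟨hW, trivial⟩, hξ.2⟩⟩
          rwa [add_le_add_iff_left] at this
        · rwa [two_add_mod12] at hMe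
      · rintro ⟨m, hm, hme⟩
        refine ⟨2 + m, ⟨⟨hadd m hm.1.1, by rw [hQ2]; exact ⟨⟨hW, trivial⟩, hm.1.2⟩⟩, ?_⟩,
          by rwa [two_add_mod12]⟩
        intro ξ hξ
        rcases ord_cases12 ξ with rfl | rfl | ⟨ξ', rfl⟩
        · exact zero_le
        · exact le_trans (by norm_num : (1:Ordinal) ≤ 2) ((le_self_add : (2:Ordinal) ≤ 2 + m))
        · have hξ'η : ξ' < η := lt_of_le_of_lt ((le_add_self : ξ' ≤ 2 + ξ')) hξ.1
          have hP : (α, y) ∈ Pc ξ' := by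
            have := hξ.2; rw [hQ2] at this; exact this.2
          exact (add_le_add_iff_left 2).mpr (hm.2 ⟨hξ'η, hP⟩)
    · -- no ξ : both sides false
      have hyA : y ∈ A α := by
        by_contra hy
        have : y ∈ (A α)ᶜ := hy
        rw [hA α hW] at this
        obtain ⟨m, hm, -⟩ := this
        exact hex ⟨m, hm.1.1, hm.1.2⟩
      constructor
      · rintro ⟨M, hM, hMe⟩
        have h1T : (1:Ordinal) ∈ {ξ : Ordinal | ξ < η ∧ (α, y) ∈ Q ξ} :=
          ⟨h1η, by rw [hQ1]; exact ⟨hW, trivial⟩⟩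
        have h1M : (1:Ordinal) ≤ M := hM.2 h1T
        have hM1 : M = 1 := by
          rcases ord_cases12 M with rfl | rfl | ⟨m, rfl⟩
          · exact absurd h1M (by simp)
          · rfl
          · exfalso
            have := hM.1.2
            rw [hQ2] at this
            exact hex ⟨m, lt_of_le_of_lt ((le_add_self : m ≤ 2 + m)) hM.1.1, this.2⟩
        rw [hM1, Ordinal.mod_eq_of_lt (by norm_num : (1:Ordinal) < 2)] at hMe
        exact absurd hMe one_ne_zero
      · intro h
        exact absurd ⟨hW, hyA⟩ h
  · -- α ∉ W : both sides true
    constructor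
    · intro _
      exact fun h => hW h.1
    · intro _
      refine ⟨0, ⟨⟨hηpos, by rw [hQ0]; trivial⟩, ?_⟩, Ordinal.zero_mod 2⟩
      intro ξ hξ
      by_contra hle
      have hξ0 : ξ ≠ 0 := by
        intro h; exact hle (le_of_eq h)
      have := hQW ξ hξ0 hξ.2
      exact hW this.1
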